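/- arXiv:2104.09950 — 4 statements merged into one kernel-verified Lean document; each statement's English description precedes it below -/
import Mathlib

section
/- Let T be a finite tree and w : V(T) → ℕ a weight function with total weight τ = ∑_{t ∈ V(T)} w(t), such that 1 ≤ w(t) ≤ 2τ/5 for every vertex t. Then there exists a non-leaf vertex t̂ of T such that the connected components of T − t̂ can be partitioned into two collections C₁ and C₂ with ∑_{C ∈ C₁} w(C) ≤ 2τ/3 and ∑_{C ∈ C₂} w(C) ≤ 2τ/3, where w(C) denotes the sum of the weights of the vertices of C. -/
open SimpleGraph Finset

variable {V : Type} [Fintype V] [DecidableEq V]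

/-- `x` and `y` are connected in `T - t0`. -/
def Reach (T : SimpleGraph V) (t0 u v : V) : Prop :=
  ∃ p : T.Walk u v, t0 ∉ p.support

namespace Reach

variable {T : SimpleGraph V} {t0 u v x : V}

theorem ne_left (h : Reach T t0 u v) : u ≠ t0 := by
  obtain ⟨p, hp⟩ := h
  exact fun he => hp (he ▸ p.start_mem_support)

theorem ne_right (h : Reach T t0 u v) : v ≠ t0 := by
  obtain ⟨p, hp⟩ := h
  exact fun he => hp (he ▸ p.end_mem_support)

theorem refl (h : u ≠ t0) : Reach T t0 u u :=
  ⟨SimpleGraph.Walk.nil, by simpa using Ne.symm h⟩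

theorem symm (h : Reach T t0 u v) : Reach T t0 v u := by
  obtain ⟨p, hp⟩ := h
  exact ⟨p.reverse, by simpa [SimpleGraph.Walk.support_reverse] using hp⟩

theorem trans (h : Reach T t0 u v) (h' : Reach T t0 v x) : Reach T t0 u x := by
  obtain ⟨p, hp⟩ := h
  obtain ⟨q, hq⟩ := h'
  exact ⟨p.append q, by
    rw [SimpleGraph.Walk.mem_support_append_iff]
    rintro (h | h) <;> [exact hp h; exact hq h]⟩

end Reach

/-- From a walk ending at `t0` (starting elsewhere) we can extract a neighbour
`v` of `t0` reachable from the start avoiding `t0`, within the walk. -/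
theorem extract' {T : SimpleGraph V} {t0 y z : V} (q : T.Walk y z) :
    z = t0 → y ≠ t0 → ∃ v, T.Adj t0 v ∧ ∃ r : T.Walk y v, t0 ∉ r.support ∧
      ∀ x ∈ r.support, x ∈ q.support := by
  induction q with
  | nil => exact fun hz hy => absurd hz hy
  | @cons a c d h q ih =>
    intro hz hy
    by_cases hc : c = t0
    · subst hc hz
      exact ⟨a, h.symm, SimpleGraph.Walk.nil, by simpa using Ne.symm hy,
        by intro x hx; simp at hx; subst hx; exact SimpleGraph.Walk.start_mem_support _⟩
    · obtain ⟨v, hv, r, hr1, hr2⟩ := ih hz hc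
      refine ⟨v, hv, SimpleGraph.Walk.cons h r, ?_, ?_⟩
      · rw [SimpleGraph.Walk.support_cons]
        rintro (h' | h')
        · exact hy rfl
        · exact hr1 (by assumption)
      · intro x hx
        rw [SimpleGraph.Walk.support_cons] at hx ⊢
        rcases List.mem_cons.mp hx with h' | h'
        · exact List.mem_cons.mpr (Or.inl h')
        · exact List.mem_cons.mpr (Or.inr (hr2 x h'))

/-- Two distinct neighbours of `t0` lie in distinct components of `T - t0`. -/
theorem uniqnbr {T : SimpleGraph V} (hacyc : T.IsAcyclic) {t0 a b : V}
    (ha : T.Adj t0 a) (hb : T.Adj t0 b) (hab : a ≠ b) : ¬ Reach T t0 a b := by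
  rintro ⟨p, hp⟩
  have hp' : t0 ∉ p.bypass.support := fun h => hp (p.support_bypass_subset h)
  have hpath : p.bypass.IsPath := p.bypass_isPath
  set q : T.Walk a t0 := p.bypass.append (SimpleGraph.Walk.cons hb.symm SimpleGraph.Walk.nil) with hq
  have hqpath : q.IsPath := by
    rw [SimpleGraph.Walk.isPath_def, hq, SimpleGraph.Walk.support_append]
    simp only [SimpleGraph.Walk.support_cons, SimpleGraph.Walk.support_nil, List.tail_cons]
    rw [List.nodup_append]
    exact ⟨hpath.support_nodup, List.nodup_singleton _,
      by intro x hx y hy hxy; rw [List.mem_singleton] at hy; exact hp' (by rw [← hy, ← hxy]; exact hx)⟩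
  have hqe : s(t0, a) ∉ q.edges := by
    rw [hq]
    intro he
    rw [SimpleGraph.Walk.edges_append] at he
    rcases List.mem_append.mp he with he | he
    · exact hp' (SimpleGraph.Walk.fst_mem_support_of_mem_edges _ he)
    · simp only [SimpleGraph.Walk.edges_cons, SimpleGraph.Walk.edges_nil] at he
      rcases List.mem_singleton.mp he with he
      rw [Sym2.eq_iff] at he
      rcases he with ⟨h1, h2⟩ | ⟨h1, h2⟩
      · exact ha.ne h2.symm
      · exact hab h2
  exact hacyc (SimpleGraph.Walk.cons ha q)
    ((SimpleGraph.Walk.cons_isCycle_iff q ha).mpr ⟨hqpath, hqe⟩)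

/-- If `v` is the neighbour of `t0` in the component of `y`, then any walk from
`y` avoiding `v` also avoids `t0`. -/
theorem avoid {T : SimpleGraph V} (hacyc : T.IsAcyclic) {t0 v y z : V}
    (hadj : T.Adj t0 v) (hry : Reach T t0 v y) (q : T.Walk y z)
    (hv : v ∉ q.support) : t0 ∉ q.support := by
  intro ht
  obtain ⟨v'', hadj'', r, hrt0, hrsub⟩ :=
    extract' (q.takeUntil t0 ht) rfl hry.ne_right
  have hsub : ∀ x ∈ r.support, x ∈ q.support := fun x hx =>
    q.support_takeUntil_subset ht (hrsub x hx)
  have hne : v ≠ v'' := fun he => hv (hsub _ (he ▸ r.end_mem_support))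
  exact uniqnbr hacyc hadj hadj'' hne (hry.trans ⟨r, hrt0⟩)

/-- The abstract partition lemma. -/
theorem part {ι : Type*} [DecidableEq ι] (s : Finset ι) (a : ι → ℕ) (τ : ℕ)
    (h1 : ∀ i ∈ s, 1 ≤ a i) (h2 : ∀ i ∈ s, 2 * a i ≤ τ)
    (h3 : ∑ i ∈ s, a i ≤ τ) :
    ∃ P ⊆ s, 3 * ∑ i ∈ P, a i ≤ 2 * τ ∧ 3 * ∑ i ∈ s \ P, a i ≤ 2 * τ := by
  classical
  set F := s.powerset.filter (fun P => 3 * ∑ i ∈ P, a i ≤ 2 * τ) with hF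
  have hne : F.Nonempty := ⟨∅, by simp [hF]⟩
  obtain ⟨P, hPF, hmax⟩ := F.exists_max_image (fun P => ∑ i ∈ P, a i) hne
  rw [hF, Finset.mem_filter, Finset.mem_powerset] at hPF
  obtain ⟨hPs, hPle⟩ := hPF
  refine ⟨P, hPs, hPle, ?_⟩
  by_cases hsP : s ⊆ P
  · have : s \ P = ∅ := Finset.sdiff_eq_empty_iff_subset.mpr hsP
    simp [this]
  · obtain ⟨i, his, hiP⟩ := Finset.not_subset.mp hsP
    have hi1 := h1 i his
    have hi2 := h2 i his
    have hsingle : ({i} : Finset ι) ∈ F := by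
      rw [hF, Finset.mem_filter, Finset.mem_powerset]
      exact ⟨Finset.singleton_subset_iff.mpr his, by simpa using by omega⟩
    have hile : a i ≤ ∑ j ∈ P, a j := by simpa using hmax _ hsingle
    have hins : ¬ (3 * ∑ j ∈ insert i P, a j ≤ 2 * τ) := by
      intro hcon
      have : (insert i P) ∈ F := by
        rw [hF, Finset.mem_filter, Finset.mem_powerset]
        exact ⟨Finset.insert_subset his hPs, hcon⟩
      have := hmax _ this
      rw [Finset.sum_insert hiP] at this
      omega
    rw [Finset.sum_insert hiP] at hins
    have hsd : ∑ j ∈ s \ P, a j + ∑ j ∈ P, a j = ∑ j ∈ s, a j :=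
      Finset.sum_sdiff hPs
    omega

open scoped Classical in
/-- Total weight of the component of `u` in `T - t0`. -/
noncomputable def compW (T : SimpleGraph V) (w : V → ℕ) (t0 u : V) : ℕ :=
  ∑ x ∈ Finset.univ.filter (fun x => Reach T t0 u x), w x

theorem centroid (T : SimpleGraph V) (hconn : T.Connected) (hacyc : T.IsAcyclic)
    (w : V → ℕ) (hlb : ∀ v, 1 ≤ w v) :
    ∃ t0 : V, ∀ u, u ≠ t0 → 2 * compW T w t0 u ≤ ∑ v, w v := by
  classical
  haveI : Nonempty V := hconn.nonempty
  set m : V → ℕ := fun t => (univ.filter (· ≠ t)).sup (compW T w t) with hm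
  obtain ⟨t0, -, hmin⟩ := Finset.exists_min_image univ m univ_nonempty
  refine ⟨t0, ?_⟩
  by_contra hcon
  push_neg at hcon
  obtain ⟨u, hu, hW⟩ := hcon
  obtain ⟨q⟩ := hconn.preconnected u t0
  obtain ⟨v, hadj, r, hrt0, -⟩ := extract' q rfl hu
  have hRuv : Reach T t0 u v := ⟨r, hrt0⟩
  have key : ∀ x, x ≠ v → compW T w v x < compW T w t0 u := by
    intro x hx
    by_cases hxC : Reach T t0 u x
    · have hsub : univ.filter (fun y => Reach T v x y) ⊆
          (univ.filter (fun y => Reach T t0 u y)).erase v := by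
        intro y hy
        simp only [mem_filter, mem_univ, true_and] at hy
        obtain ⟨qq, hqq⟩ := hy
        have ht0q : t0 ∉ qq.support := avoid hacyc hadj (hRuv.symm.trans hxC) qq hqq
        rw [mem_erase]
        refine ⟨fun he => hqq (he ▸ qq.end_mem_support), ?_⟩
        simp only [mem_filter, mem_univ, true_and]
        exact hxC.trans ⟨qq, ht0q⟩
      have h1 : compW T w v x ≤
          ∑ y ∈ (univ.filter (fun y => Reach T t0 u y)).erase v, w y := by
        rw [compW]
        exact Finset.sum_le_sum_of_subset hsub
      have h2 : ∑ y ∈ (univ.filter (fun y => Reach T t0 u y)).erase v, w y + w v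
          = compW T w t0 u := by
        rw [compW]
        exact Finset.sum_erase_add _ _ (by simp [hRuv])
      have := hlb v
      omega
    · have hdisj : Disjoint (univ.filter (fun y => Reach T v x y))
          (univ.filter (fun y => Reach T t0 u y)) := by
        rw [Finset.disjoint_left]
        intro y hy1 hy2
        simp only [mem_filter, mem_univ, true_and] at hy1 hy2
        obtain ⟨qq, hqq⟩ := hy1.symm
        have ht0q : t0 ∉ qq.support := avoid hacyc hadj (hRuv.symm.trans hy2) qq hqq
        exact hxC (hy2.trans ⟨qq, ht0q⟩)
      have h1 : compW T w v x + compW T w t0 u ≤ ∑ y, w y := by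
        rw [compW, compW, ← Finset.sum_union hdisj]
        exact Finset.sum_le_sum_of_subset (Finset.subset_univ _)
      omega
  have h0 : 0 < compW T w t0 u := by
    have : w u ≤ compW T w t0 u := by
      rw [compW]
      exact Finset.single_le_sum (fun i _ => Nat.zero_le _) (by simp [Reach.refl hu])
    have := hlb u
    omega
  have hmv : m v < compW T w t0 u := by
    rw [hm]
    refine Finset.sup_lt_iff h0 |>.mpr ?_
    intro x hxf
    exact key x (by simpa using (mem_filter.mp hxf).2)
  have hle : compW T w t0 u ≤ m t0 := by
    rw [hm]
    exact Finset.le_sup (by simp [hu])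
  have := hmin v (mem_univ v)
  omega

theorem exists_two_nbrs (T : SimpleGraph V) (hconn : T.Connected)
    (w : V → ℕ) (τ : ℕ) (hτ : τ = ∑ v, w v)
    (hlb : ∀ v, 1 ≤ w v) (hub : ∀ v, (w v : ℚ) ≤ 2 * (τ : ℚ) / 5) {t0 : V}
    (hcent : ∀ u, u ≠ t0 → 2 * compW T w t0 u ≤ τ) :
    ∃ a b : V, a ≠ b ∧ T.Adj t0 a ∧ T.Adj t0 b := by
  classical
  haveI : Nonempty V := hconn.nonempty
  have hτ1 : 1 ≤ τ := by
    rw [hτ]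
    calc 1 ≤ w (Classical.arbitrary V) := hlb _
    _ ≤ ∑ v, w v := Finset.single_le_sum (fun i _ => Nat.zero_le _) (mem_univ _)
  have hτ1Q : (1:ℚ) ≤ (τ:ℚ) := by exact_mod_cast hτ1
  have hx : ∃ x : V, x ≠ t0 := by
    by_contra h
    push_neg at h
    have huniv : (univ : Finset V) = {t0} := by
      ext y; simp [h y]
    have hwt : τ = w t0 := by rw [hτ, huniv, Finset.sum_singleton]
    have h5 := hub t0
    rw [← hwt] at h5
    linarith
  obtain ⟨x, hxt⟩ := hx
  obtain ⟨q⟩ := hconn.preconnected x t0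
  obtain ⟨a, hadja, r, hrt0, -⟩ := extract' q rfl hxt
  by_contra hno
  push_neg at hno
  have hall : ∀ c, T.Adj t0 c → c = a := by
    intro c hc
    by_contra hne
    exact hno c a hne hc hadja
  have hcomp : ∀ y, y ≠ t0 → Reach T t0 a y := by
    intro y hy
    obtain ⟨qy⟩ := hconn.preconnected y t0
    obtain ⟨b, hb, rb, hrb, -⟩ := extract' qy rfl hy
    have hba : b = a := hall b hb
    subst hba
    exact (Reach.symm ⟨rb, hrb⟩)
  have hsumeq : compW T w t0 a + w t0 = τ := by
    have hfe : univ.filter (fun y => Reach T t0 a y) = univ.erase t0 := by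
      ext y
      simp only [mem_filter, mem_univ, true_and, mem_erase, and_true]
      exact ⟨fun h => h.ne_right, fun h => hcomp y h⟩
    rw [compW, hfe, Finset.sum_erase_add _ _ (mem_univ t0), hτ]
  have hc := hcent a hadja.ne'
  have h2 : τ ≤ 2 * w t0 := by omega
  have h2Q : (τ:ℚ) ≤ 2 * (w t0 : ℚ) := by exact_mod_cast h2
  have h5 := hub t0
  linarith

theorem reach_of_induce_walk {T : SimpleGraph V} {t0 : V}
    {a b : {x : V | x ≠ t0}} (p : (T.induce {x : V | x ≠ t0}).Walk a b) :
    Reach T t0 a.1 b.1 := by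
  induction p with
  | @nil a => exact Reach.refl (by exact a.2)
  | @cons a c d h q ih =>
    have hadj : T.Adj a.1 c.1 := h
    exact Reach.trans ⟨SimpleGraph.Walk.cons hadj SimpleGraph.Walk.nil,
      by simp [SimpleGraph.Walk.support_cons]; exact ⟨Ne.symm a.2, Ne.symm c.2⟩⟩ ih

theorem induce_reachable_of_reach {T : SimpleGraph V} {t0 u v : V}
    (h : Reach T t0 u v) (hu : u ≠ t0) (hv : v ≠ t0) :
    (T.induce {x : V | x ≠ t0}).Reachable ⟨u, hu⟩ ⟨v, hv⟩ := by
  obtain ⟨p, hp⟩ := h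
  revert hp
  induction p with
  | nil => intro _; exact SimpleGraph.Reachable.refl _
  | @cons a c d h q ih =>
    intro hp
    rw [SimpleGraph.Walk.support_cons] at hp
    have hc : c ≠ t0 := fun he => hp (List.mem_cons.mpr (Or.inr (he ▸ q.start_mem_support)))
    have hq : t0 ∉ q.support := fun he => hp (List.mem_cons.mpr (Or.inr he))
    have hadj : (T.induce {x : V | x ≠ t0}).Adj ⟨a, hu⟩ ⟨c, hc⟩ := h
    exact hadj.reachable.trans (ih hc hv hq)

/-- Transfer sums over the subtype `{x | x ≠ t0}` to sums over `V`. -/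
theorem sum_subtype_filter {t0 : V} (w : V → ℕ) (q : V → Prop) [DecidablePred q]
    (hq : ∀ x, q x → x ≠ t0) :
    ∑ x ∈ Finset.univ.filter (fun x : {x : V | x ≠ t0} => q x.1), w x.1
      = ∑ v ∈ Finset.univ.filter q, w v := by
  refine Finset.sum_bij' (fun (x : {x : V | x ≠ t0}) _ => x.1)
    (fun v hv => ⟨v, hq v (by simpa using hv)⟩) ?_ ?_ ?_ ?_ ?_
  · intro a ha; simpa using (Finset.mem_filter.mp ha).2
  · intro a ha; simpa using (Finset.mem_filter.mp ha).2
  · intro a ha; rfl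
  · intro a ha; rfl
  · intro a ha; rfl



/-- In a finite tree `T` with weights `w` such that
`1 ≤ w t ≤ 2τ/5` for all vertices (where `τ` is the total weight), there is a
non-leaf vertex `t0` (i.e. a vertex with at least two distinct neighbours) such
that the connected components of `T − t0` can be two-coloured (via `g`, constant
on components of `T − t0`) so that each colour class has total weight at most `2τ/3`. -/
theorem stmt0 {V : Type} [Fintype V] [DecidableEq V] (T : SimpleGraph V)
    (hconn : T.Connected) (hacyc : T.IsAcyclic) (w : V → ℕ) (τ : ℕ)
    (hτ : τ = ∑ v, w v)
    (hlb : ∀ v, 1 ≤ w v) (hub : ∀ v, (w v : ℚ) ≤ 2 * (τ : ℚ) / 5) :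
    ∃ t0 : V, (∃ a b : V, a ≠ b ∧ T.Adj t0 a ∧ T.Adj t0 b) ∧
      ∃ g : V → Bool,
        (∀ (u v : V) (hu : u ≠ t0) (hv : v ≠ t0),
            (T.induce {x | x ≠ t0}).Reachable ⟨u, hu⟩ ⟨v, hv⟩ → g u = g v) ∧
        ((∑ v ∈ Finset.univ.filter (fun v => v ≠ t0 ∧ g v = true), w v : ℕ) : ℚ)
            ≤ 2 * (τ : ℚ) / 3 ∧
        ((∑ v ∈ Finset.univ.filter (fun v => v ≠ t0 ∧ g v = false), w v : ℕ) : ℚ)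
            ≤ 2 * (τ : ℚ) / 3 := by
  classical
  obtain ⟨t0, hcent0⟩ := centroid T hconn hacyc w hlb
  have hcent : ∀ u, u ≠ t0 → 2 * compW T w t0 u ≤ τ := by
    intro u hu; rw [hτ]; exact hcent0 u hu
  refine ⟨t0, exists_two_nbrs T hconn w τ hτ hlb hub hcent, ?_⟩
  set G := T.induce {x : V | x ≠ t0} with hG
  haveI : Fintype G.ConnectedComponent := Fintype.ofFinite _
  set Wc : G.ConnectedComponent → ℕ := fun c =>
    ∑ x ∈ Finset.univ.filter
      (fun x : {x : V | x ≠ t0} => G.connectedComponentMk x = c), w x.1 with hWc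
  have hiff : ∀ x x' : {x : V | x ≠ t0},
      G.connectedComponentMk x' = G.connectedComponentMk x ↔ Reach T t0 x.1 x'.1 := by
    intro x x'
    rw [SimpleGraph.ConnectedComponent.eq]
    constructor
    · rintro ⟨p⟩
      exact (reach_of_induce_walk p).symm
    · intro h
      exact induce_reachable_of_reach h.symm (by exact x'.2) (by exact x.2)
  have WcEq : ∀ x : {x : V | x ≠ t0},
      Wc (G.connectedComponentMk x) = compW T w t0 x.1 := by
    intro x
    simp only [hWc, compW]
    rw [Finset.filter_congr (fun x' _ => hiff x x')]
    exact sum_subtype_filter w (fun y => Reach T t0 x.1 y) (fun y hy => hy.ne_right)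
  have fact1 : ∀ c ∈ (Finset.univ : Finset G.ConnectedComponent), 1 ≤ Wc c := by
    intro c _
    obtain ⟨x, rfl⟩ := c.exists_rep
    have hxm : x ∈ Finset.univ.filter
        (fun x' : {x : V | x ≠ t0} =>
          G.connectedComponentMk x' = Quot.mk G.Reachable x) := by
      simp only [Finset.mem_filter, Finset.mem_univ, true_and]
      rfl
    calc 1 ≤ w x.1 := hlb _
    _ ≤ Wc (Quot.mk G.Reachable x) := by
      simp only [hWc]
      exact Finset.single_le_sum (f := fun x' : {x : V | x ≠ t0} => w x'.1)
        (fun i _ => Nat.zero_le _) hxm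
  have fact2 : ∀ c ∈ (Finset.univ : Finset G.ConnectedComponent), 2 * Wc c ≤ τ := by
    intro c _
    obtain ⟨x, rfl⟩ := c.exists_rep
    have h := WcEq x
    rw [show G.connectedComponentMk x = Quot.mk G.Reachable x from rfl] at h
    rw [h]
    exact hcent x.1 (by exact x.2)
  have fact3 : ∑ c : G.ConnectedComponent, Wc c ≤ τ := by
    have h1 : ∑ c : G.ConnectedComponent, Wc c
        = ∑ x : {x : V | x ≠ t0}, w x.1 := by
      simp only [hWc]
      exact Finset.sum_fiberwise_of_maps_to (fun x _ => Finset.mem_univ _) _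
    have h2 : ∑ x : {x : V | x ≠ t0}, w x.1
        = ∑ v ∈ Finset.univ.filter (fun v => v ≠ t0), w v := by
      rw [← sum_subtype_filter (t0 := t0) w (fun v => v ≠ t0) (fun x hx => hx)]
      rw [Finset.filter_true_of_mem (fun x _ => by exact x.2)]
    rw [h1, h2, hτ]
    exact Finset.sum_le_sum_of_subset (Finset.subset_univ _)
  obtain ⟨P, hPsub, hP1, hP2⟩ := part Finset.univ Wc τ fact1 fact2 fact3
  set g : V → Bool := fun v =>
    if h : v ≠ t0 then decide (G.connectedComponentMk ⟨v, h⟩ ∈ P) else false with hg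
  have hclass : ∀ (b : Bool) (S : Finset G.ConnectedComponent),
      (∀ (v : V) (h : v ≠ t0), g v = b ↔ G.connectedComponentMk ⟨v, h⟩ ∈ S) →
      ∑ v ∈ Finset.univ.filter (fun v => v ≠ t0 ∧ g v = b), w v
        = ∑ c ∈ S, Wc c := by
    intro b S hS
    have hcond : ∀ v : V, (v ≠ t0 ∧ g v = b) ↔
        (∃ h : v ≠ t0, G.connectedComponentMk ⟨v, h⟩ ∈ S) := by
      intro v
      constructor
      · rintro ⟨h, hgv⟩
        exact ⟨h, (hS v h).mp hgv⟩
      · rintro ⟨h, hm⟩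
        exact ⟨h, (hS v h).mpr hm⟩
    rw [Finset.filter_congr (fun v _ => hcond v)]
    rw [← sum_subtype_filter (t0 := t0) w
      (fun v => ∃ h : v ≠ t0, G.connectedComponentMk ⟨v, h⟩ ∈ S)
      (fun x hx => hx.choose)]
    have hfeq : (Finset.univ.filter (fun x : {x : V | x ≠ t0} =>
          ∃ h : x.1 ≠ t0, G.connectedComponentMk ⟨x.1, h⟩ ∈ S))
        = Finset.univ.filter (fun x : {x : V | x ≠ t0} =>
          G.connectedComponentMk x ∈ S) := by
      apply Finset.filter_congr
      intro x _
      exact ⟨fun ⟨h, hm⟩ => hm, fun hm => ⟨x.2, hm⟩⟩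
    rw [hfeq]
    rw [← Finset.sum_fiberwise_of_maps_to
      (g := fun x : {x : V | x ≠ t0} => G.connectedComponentMk x) (t := S)
      (fun x hx => (Finset.mem_filter.mp hx).2) (fun x : {x : V | x ≠ t0} => w x.1)]
    refine Finset.sum_congr rfl ?_
    intro c hc
    simp only [hWc]
    congr 1
    ext x
    simp only [Finset.mem_filter, Finset.mem_univ, true_and]
    constructor
    · rintro ⟨-, h⟩; exact h
    · intro h; exact ⟨h ▸ hc, h⟩
  refine ⟨g, ?_, ?_, ?_⟩
  · intro u v hu hv hr
    have hcc : G.connectedComponentMk ⟨u, hu⟩ = G.connectedComponentMk ⟨v, hv⟩ :=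
      SimpleGraph.ConnectedComponent.sound hr
    simp only [hg, dif_pos hu, dif_pos hv, hcc]
  · have h := hclass true P (by
      intro v hv
      simp only [hg, dif_pos hv]
      exact decide_eq_true_iff)
    rw [h, le_div_iff₀ (by norm_num : (0:ℚ) < 3)]
    have : (∑ c ∈ P, Wc c) * 3 ≤ 2 * τ := by omega
    exact_mod_cast this
  · have h := hclass false (Finset.univ \ P) (by
      intro v hv
      simp only [hg, dif_pos hv]
      simp [decide_eq_false_iff_not])
    rw [h, le_div_iff₀ (by norm_num : (0:ℚ) < 3)]
    have : (∑ c ∈ Finset.univ \ P, Wc c) * 3 ≤ 2 * τ := by omega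
    exact_mod_cast this
end

section
/- Let G be an (s,c)-unbreakable graph and S ⊆ V(G) with |S| ≤ c. If every connected component of G − S has fewer than s vertices, then |V(G)| < 3s + c. -/
/-- `(X, Y)` is a separation of `G`: the two sides cover all vertices and there is
no edge between `X \ Y` and `Y \ X`. -/
def IsSeparation {V : Type} (G : SimpleGraph V) (X Y : Set V) : Prop :=
  X ∪ Y = Set.univ ∧ ∀ u ∈ X \ Y, ∀ v ∈ Y \ X, ¬ G.Adj u v

/-- `G` is `(s, c)`-unbreakable: there is no separation of order at most `c`
with both strict sides of size at least `s`. -/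
def Unbreakable {V : Type} (G : SimpleGraph V) (s c : ℕ) : Prop :=
  ¬ ∃ X Y : Set V, IsSeparation G X Y ∧ (X ∩ Y).ncard ≤ c ∧
      s ≤ (X \ Y).ncard ∧ s ≤ (Y \ X).ncard

/-- Greedy: from a family of weights each `< s` with total at least `s`,
one can select a subfamily with total in `[s, 2s)`. -/
lemma greedy_mid {ι : Type*} [DecidableEq ι] (s : ℕ) (hs : 0 < s) :
    ∀ (u : Finset ι) (w : ι → ℕ), (∀ i ∈ u, w i < s) → s ≤ ∑ i ∈ u, w i →
      ∃ t ⊆ u, s ≤ ∑ i ∈ t, w i ∧ ∑ i ∈ t, w i < 2 * s := by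
  intro u
  induction u using Finset.induction_on with
  | empty =>
      intro w _ h
      simp only [Finset.sum_empty] at h
      omega
  | @insert a u' ha ih =>
      intro w hw hsum
      by_cases h2 : ∑ i ∈ insert a u', w i < 2 * s
      · exact ⟨insert a u', Finset.Subset.refl _, hsum, h2⟩
      · have hwa : w a < s := hw a (Finset.mem_insert_self _ _)
        rw [Finset.sum_insert ha] at h2
        have hsum' : s ≤ ∑ i ∈ u', w i := by omega
        obtain ⟨t, ht, h1, h2'⟩ :=
          ih w (fun i hi => hw i (Finset.mem_insert_of_mem hi)) hsum'
        exact ⟨t, ht.trans (Finset.subset_insert _ _), h1, h2'⟩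

/-- Greedy splitting: weights each `< s`, total at least `3s`, can be split into
two groups each of total at least `s`. -/
lemma greedy_split {ι : Type*} [DecidableEq ι] (s : ℕ) (u : Finset ι) (w : ι → ℕ)
    (hw : ∀ i ∈ u, w i < s) (htot : 3 * s ≤ ∑ i ∈ u, w i) :
    ∃ t ⊆ u, s ≤ ∑ i ∈ t, w i ∧ s ≤ ∑ i ∈ u \ t, w i := by
  rcases Nat.eq_zero_or_pos s with rfl | hs
  · exact ⟨∅, Finset.empty_subset _, Nat.zero_le _, Nat.zero_le _⟩
  · obtain ⟨t, ht, h1, h2⟩ := greedy_mid s hs u w hw (by omega)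
    refine ⟨t, ht, h1, ?_⟩
    have := Finset.sum_sdiff (f := w) ht
    omega

/-- If `G` is `(s, c)`-unbreakable, `|S| ≤ c` and every connected
component of `G − S` has fewer than `s` vertices, then `|V(G)| < 3s + c`. -/
theorem stmt2 {V : Type} [Fintype V] (G : SimpleGraph V) (s c : ℕ)
    (S : Set V) (hS : S.ncard ≤ c) (hunb : Unbreakable G s c)
    (hsmall : ∀ C : (G.induce Sᶜ).ConnectedComponent, C.supp.ncard < s) :
    Fintype.card V < 3 * s + c := by
  classical
  by_contra hcon
  push_neg at hcon
  apply hunb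
  set H := G.induce Sᶜ with hH
  haveI : Fintype ↥Sᶜ := Fintype.ofFinite _
  haveI : Fintype H.ConnectedComponent := Fintype.ofFinite _
  set comp : ↥Sᶜ → H.ConnectedComponent := H.connectedComponentMk with hcomp
  set w : H.ConnectedComponent → ℕ := fun C => C.supp.toFinset.card with hwdef
  -- each weight is < s
  have hw : ∀ C, w C < s := by
    intro C
    have := hsmall C
    rwa [Set.ncard_eq_toFinset_card'] at this
  -- fibers of `comp` over a component `C` are exactly `C.supp`
  have hfiber : ∀ (u : Finset ↥Sᶜ) (C : H.ConnectedComponent),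
      (∀ v ∈ u, comp v = C → v ∈ u) → True := fun _ _ _ => trivial
  have hfilter : ∀ C : H.ConnectedComponent,
      Finset.univ.filter (fun v => comp v = C) = C.supp.toFinset := by
    intro C
    ext v
    simp [SimpleGraph.ConnectedComponent.mem_supp_iff, hcomp]
  have hfilter' : ∀ C : H.ConnectedComponent,
      (Finset.univ.filter (fun v => comp v = C)).card = w C := by
    intro C; rw [hfilter C]
  -- total weight is the size of Sᶜ
  have htot : ∑ C : H.ConnectedComponent, w C = Fintype.card ↥Sᶜ := by
    rw [← Finset.card_univ,
      Finset.card_eq_sum_card_fiberwise (f := comp) (t := Finset.univ)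
        (fun v _ => Finset.mem_univ _)]
    exact Finset.sum_congr rfl fun C _ => (hfilter' C).symm
  have hcardSc : Sᶜ.ncard = Fintype.card ↥Sᶜ := by
    rw [← Nat.card_coe_set_eq, Nat.card_eq_fintype_card]
  have hsplitcard : S.ncard + Sᶜ.ncard = Fintype.card V := by
    rw [Set.ncard_add_ncard_compl S, Nat.card_eq_fintype_card]
  have htot3 : 3 * s ≤ ∑ C : H.ConnectedComponent, w C := by
    rw [htot, ← hcardSc]; omega
  obtain ⟨t, _, hA, hB⟩ :=
    greedy_split s Finset.univ w (fun C _ => hw C) htot3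
  -- the two vertex sets
  set At : Finset ↥Sᶜ := Finset.univ.filter (fun v => comp v ∈ t) with hAt
  set Bt : Finset ↥Sᶜ := Finset.univ.filter (fun v => comp v ∉ t) with hBt
  have hAcard : At.card = ∑ C ∈ t, w C := by
    rw [Finset.card_eq_sum_card_fiberwise (s := At) (f := comp) (t := t)
      (fun v hv => (Finset.mem_filter.mp hv).2)]
    refine Finset.sum_congr rfl fun C hC => ?_
    rw [← hfilter' C]
    congr 1
    ext v
    simp only [Finset.mem_filter, hAt, Finset.mem_univ, true_and]
    constructor
    · rintro ⟨_, h⟩; exact h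
    · rintro h; exact ⟨h ▸ hC, h⟩
  have hBcard : Bt.card = ∑ C ∈ Finset.univ \ t, w C := by
    rw [Finset.card_eq_sum_card_fiberwise (s := Bt) (f := comp) (t := Finset.univ \ t)
      (fun v hv => by
        simp only [Finset.mem_coe, Finset.mem_sdiff, Finset.mem_univ, true_and]
        exact (Finset.mem_filter.mp hv).2)]
    refine Finset.sum_congr rfl fun C hC => ?_
    rw [← hfilter' C]
    congr 1
    ext v
    simp only [Finset.mem_filter, hBt, Finset.mem_univ, true_and]
    have hCnot : C ∉ t := (Finset.mem_sdiff.mp hC).2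
    constructor
    · rintro ⟨_, h⟩; exact h
    · rintro h; exact ⟨h ▸ hCnot, h⟩
  set A : Set V := ↑(At.image Subtype.val) with hAdef
  set B : Set V := ↑(Bt.image Subtype.val) with hBdef
  have hAsub : A ⊆ Sᶜ := by
    intro v hv
    simp only [hAdef, Finset.coe_image, Set.mem_image, Finset.mem_coe] at hv
    obtain ⟨u, _, rfl⟩ := hv
    exact u.2
  have hBsub : B ⊆ Sᶜ := by
    intro v hv
    simp only [hBdef, Finset.coe_image, Set.mem_image, Finset.mem_coe] at hv
    obtain ⟨u, _, rfl⟩ := hv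
    exact u.2
  have hmemA : ∀ (u : ↥Sᶜ), (u : V) ∈ A ↔ comp u ∈ t := by
    intro u
    simp only [hAdef, Finset.coe_image, Set.mem_image, Finset.mem_coe, hAt,
      Finset.mem_filter, Finset.mem_univ, true_and]
    constructor
    · rintro ⟨x, hx, hxu⟩
      have : x = u := Subtype.ext hxu
      exact this ▸ hx
    · intro h; exact ⟨u, h, rfl⟩
  have hmemB : ∀ (u : ↥Sᶜ), (u : V) ∈ B ↔ comp u ∉ t := by
    intro u
    simp only [hBdef, Finset.coe_image, Set.mem_image, Finset.mem_coe, hBt,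
      Finset.mem_filter, Finset.mem_univ, true_and]
    constructor
    · rintro ⟨x, hx, hxu⟩
      have : x = u := Subtype.ext hxu
      exact this ▸ hx
    · intro h; exact ⟨u, h, rfl⟩
  have hABdisj : ∀ v, v ∈ A → v ∈ B → False := by
    intro v hvA hvB
    have hvS : v ∈ Sᶜ := hAsub hvA
    have h1 := (hmemA ⟨v, hvS⟩).mp hvA
    have h2 := (hmemB ⟨v, hvS⟩).mp hvB
    exact h2 h1
  have hABunion : ∀ v ∈ Sᶜ, v ∈ A ∨ v ∈ B := by
    intro v hv
    by_cases h : comp ⟨v, hv⟩ ∈ t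
    · exact Or.inl ((hmemA ⟨v, hv⟩).mpr h)
    · exact Or.inr ((hmemB ⟨v, hv⟩).mpr h)
  refine ⟨A ∪ S, B ∪ S, ⟨?_, ?_⟩, ?_, ?_, ?_⟩
  · -- covers univ
    ext v
    simp only [Set.mem_union, Set.mem_univ, iff_true]
    by_cases hv : v ∈ S
    · exact Or.inl (Or.inr hv)
    · rcases hABunion v hv with h | h
      · exact Or.inl (Or.inl h)
      · exact Or.inr (Or.inl h)
  · -- no adjacency between strict sides
    intro u hu v hv hadj
    have huA : u ∈ A := by
      rcases hu.1 with h | h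
      · exact h
      · exact absurd (Or.inr h) hu.2
    have hvB : v ∈ B := by
      rcases hv.1 with h | h
      · exact h
      · exact absurd (Or.inr h) hv.2
    have huS : u ∈ Sᶜ := hAsub huA
    have hvS : v ∈ Sᶜ := hBsub hvB
    have hadj' : H.Adj ⟨u, huS⟩ ⟨v, hvS⟩ := by
      simp only [hH, SimpleGraph.comap_adj, Function.Embedding.coe_subtype]
      exact hadj
    have hreach : comp ⟨u, huS⟩ = comp ⟨v, hvS⟩ :=
      SimpleGraph.ConnectedComponent.sound hadj'.reachable
    have h1 := (hmemA ⟨u, huS⟩).mp huA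
    have h2 := (hmemB ⟨v, hvS⟩).mp hvB
    exact h2 (hreach ▸ h1)
  · -- order ≤ c
    have : (A ∪ S) ∩ (B ∪ S) = S := by
      ext v
      simp only [Set.mem_inter_iff, Set.mem_union]
      constructor
      · rintro ⟨hA' | hS', hB' | hS'⟩
        · exact absurd hB' (fun h => hABdisj v hA' h)
        · exact hS'
        · exact hS'
        · exact hS'
      · intro h; exact ⟨Or.inr h, Or.inr h⟩
    rw [this]; exact hS
  · -- first side
    have hXd : (A ∪ S) \ (B ∪ S) = A := by
      ext v
      simp only [Set.mem_diff, Set.mem_union, not_or]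
      constructor
      · rintro ⟨hA' | hS', hnB, hnS⟩
        · exact hA'
        · exact absurd hS' hnS
      · intro h
        exact ⟨Or.inl h, fun hB' => hABdisj v h hB', fun hS' => hAsub h hS'⟩
    rw [hXd, hAdef, Set.ncard_coe_finset,
      Finset.card_image_of_injective _ Subtype.val_injective, hAcard]
    exact hA
  · -- second side
    have hYd : (B ∪ S) \ (A ∪ S) = B := by
      ext v
      simp only [Set.mem_diff, Set.mem_union, not_or]
      constructor
      · rintro ⟨hB' | hS', hnA, hnS⟩
        · exact hB'
        · exact absurd hS' hnS
      · intro h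
        exact ⟨Or.inl h, fun hA' => hABdisj v hA' h, fun hS' => hBsub h hS'⟩
    rw [hYd, hBdef, Set.ncard_coe_finset,
      Finset.card_image_of_injective _ Subtype.val_injective, hBcard]
    exact hB
end

section
/- Let G be a graph on n vertices and p, q nonnegative integers. The number of vertex sets B ⊆ V(G) such that G[B] is connected and nonempty, |B| ≤ p, and |N_G(B)| ≤ q, is at most 2^{p+q} · n. -/
namespace Stmt4

variable {V : Type} [Fintype V] [LinearOrder V]

def nbr (G : SimpleGraph V) (B : Set V) : Set V := {v | v ∉ B ∧ ∃ u ∈ B, G.Adj u v}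

open Classical in
noncomputable def cand (G : SimpleGraph V) (s : ℕ → Bool) (l : List V) : Finset V :=
  Finset.univ.filter fun v => v ∉ l ∧ ∃ i : Fin l.length, s i ∧ G.Adj (l.get i) v

noncomputable def step (G : SimpleGraph V) (s : ℕ → Bool) (l : List V) : List V :=
  if h : (cand G s l).Nonempty then l ++ [(cand G s l).min' h] else l

noncomputable def run (G : SimpleGraph V) (s : ℕ → Bool) (r : V) (k : ℕ) : List V :=
  (step G s)^[k] [r]

open Classical in
noncomputable def obits (B : Set V) (l : List V) : ℕ → Bool :=
  fun i => decide (∃ h : i < l.length, l.get ⟨i, h⟩ ∈ B)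

noncomputable def ostep (G : SimpleGraph V) (B : Set V) (l : List V) : List V :=
  step G (obits B l) l

noncomputable def orun (G : SimpleGraph V) (B : Set V) (r : V) (k : ℕ) : List V :=
  (ostep G B)^[k] [r]

def pad (m : ℕ) (f : Fin m → Bool) : ℕ → Bool :=
  fun i => if h : i < m then f ⟨i, h⟩ else false

open Classical in
noncomputable def dec (G : SimpleGraph V) (m : ℕ) (x : V × (Fin m → Bool)) : Set V :=
  {v | v ∈ run G (pad m x.2) x.1 m ∧
        pad m x.2 (List.idxOf v (run G (pad m x.2) x.1 m))}

open Classical in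
lemma mem_cand {G : SimpleGraph V} {s : ℕ → Bool} {l : List V} {v : V} :
    v ∈ cand G s l ↔ v ∉ l ∧ ∃ i : Fin l.length, s i ∧ G.Adj (l.get i) v := by
  simp [cand]

lemma cand_congr {G : SimpleGraph V} {s s' : ℕ → Bool} {l : List V}
    (h : ∀ i < l.length, s i = s' i) : cand G s l = cand G s' l := by
  ext v
  simp only [mem_cand]
  constructor <;> rintro ⟨hv, i, hi, hadj⟩ <;> exact ⟨hv, i, by rw [h i i.isLt] at *; exact hi, hadj⟩

lemma prefix_step (G : SimpleGraph V) (s : ℕ → Bool) (l : List V) : l <+: step G s l := by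
  unfold step
  split
  · exact ⟨_, rfl⟩
  · exact List.prefix_refl l

lemma step_eq_of_cand_empty {G : SimpleGraph V} {s : ℕ → Bool} {l : List V}
    (h : cand G s l = ∅) : step G s l = l := by
  unfold step
  rw [h]
  simp

lemma cand_empty_of_step_eq {G : SimpleGraph V} {s : ℕ → Bool} {l : List V}
    (h : step G s l = l) : cand G s l = ∅ := by
  by_contra hne
  have hne : (cand G s l).Nonempty := Finset.nonempty_iff_ne_empty.mpr hne
  unfold step at h
  rw [dif_pos hne] at h
  have := congrArg List.length h
  simp at this

lemma orun_succ (G : SimpleGraph V) (B : Set V) (r : V) (k : ℕ) :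
    orun G B r (k + 1) = ostep G B (orun G B r k) := by
  unfold orun
  rw [Function.iterate_succ_apply']

lemma run_succ (G : SimpleGraph V) (s : ℕ → Bool) (r : V) (k : ℕ) :
    run G s r (k + 1) = step G s (run G s r k) := by
  unfold run
  rw [Function.iterate_succ_apply']

lemma orun_prefix (G : SimpleGraph V) (B : Set V) (r : V) {k m : ℕ} (h : k ≤ m) :
    orun G B r k <+: orun G B r m := by
  induction m with
  | zero => simp_all
  | succ m ih =>
    rcases Nat.lt_or_ge k (m+1) with h' | h'
    · exact (ih (Nat.lt_succ_iff.mp h')).trans (by rw [orun_succ]; exact prefix_step _ _ _)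
    · have : k = m + 1 := le_antisymm h h'
      simp [this]

lemma mem_cand_obits {G : SimpleGraph V} {B : Set V} {l : List V} {v : V} :
    v ∈ cand G (obits B l) l ↔ v ∉ l ∧ ∃ u ∈ l, u ∈ B ∧ G.Adj u v := by
  rw [mem_cand]
  constructor
  · rintro ⟨hv, i, hi, hadj⟩
    refine ⟨hv, l.get i, List.get_mem .., ?_, hadj⟩
    simp only [obits, decide_eq_true_eq] at hi
    obtain ⟨h, hB⟩ := hi
    simpa using hB
  · rintro ⟨hv, u, hu, huB, hadj⟩
    obtain ⟨i, rfl⟩ := List.mem_iff_get.mp hu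
    refine ⟨hv, i, ?_, hadj⟩
    simp only [obits, decide_eq_true_eq]
    exact ⟨i.isLt, by simpa using huB⟩

lemma orun_subset {G : SimpleGraph V} {B : Set V} {r : V} (hr : r ∈ B) (k : ℕ) :
    ∀ v ∈ orun G B r k, v ∈ B ∪ nbr G B := by
  induction k with
  | zero =>
    intro v hv
    simp only [orun, Function.iterate_zero, id_eq, List.mem_singleton] at hv
    exact hv ▸ Or.inl hr
  | succ k ih =>
    intro v hv
    rw [orun_succ] at hv
    unfold ostep step at hv
    split at hv
    · rw [List.mem_append] at hv
      rcases hv with hv | hv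
      · exact ih v hv
      · rename_i hne
        simp only [List.mem_singleton] at hv
        subst hv
        have hm := Finset.min'_mem _ hne
        rw [mem_cand_obits] at hm
        obtain ⟨-, u, -, huB, hadj⟩ := hm
        by_cases hB : (cand G (obits B (orun G B r k)) (orun G B r k)).min' hne ∈ B
        · exact Or.inl hB
        · exact Or.inr ⟨hB, u, huB, hadj⟩
    · exact ih v hv

lemma orun_nodup (G : SimpleGraph V) (B : Set V) (r : V) (k : ℕ) :
    (orun G B r k).Nodup := by
  induction k with
  | zero => simp [orun]
  | succ k ih =>
    rw [orun_succ]
    unfold ostep step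
    split
    · rename_i hne
      have hm := Finset.min'_mem _ hne
      rw [mem_cand_obits] at hm
      simp [List.nodup_append, ih, hm.1]
      intro a ha h
      exact hm.1 (h ▸ ha)
    · exact ih

open Classical in
lemma orun_length_le {G : SimpleGraph V} {B : Set V} {r : V} (hr : r ∈ B) (k : ℕ) :
    (orun G B r k).length ≤ (B ∪ nbr G B).ncard := by
  classical
  have h1 : (orun G B r k).toFinset.card = (orun G B r k).length :=
    List.toFinset_card_of_nodup (orun_nodup G B r k)
  rw [← h1, Set.ncard_eq_toFinset_card']
  apply Finset.card_le_card
  intro v hv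
  rw [List.mem_toFinset] at hv
  rw [Set.mem_toFinset]
  exact orun_subset hr k v hv

lemma exists_stable {G : SimpleGraph V} {B : Set V} {r : V} {m : ℕ}
    (hlen : ∀ k, (orun G B r k).length ≤ m) :
    ostep G B (orun G B r m) = orun G B r m := by
  by_cases H : ∃ k < m, ostep G B (orun G B r k) = orun G B r k
  · obtain ⟨k, hk, hfix⟩ := H
    have stable : ∀ j, orun G B r (k + j) = orun G B r k := by
      intro j
      induction j with
      | zero => rfl
      | succ j ih => rw [← Nat.add_assoc, orun_succ, ih, hfix]
    obtain ⟨j, rfl⟩ := Nat.exists_eq_add_of_le hk.le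
    rw [stable j]
    exact hfix
  · push_neg at H
    exfalso
    have grow : ∀ k ≤ m, (orun G B r k).length = k + 1 := by
      intro k hk
      induction k with
      | zero => simp [orun]
      | succ k ih =>
        have hk' : k < m := Nat.lt_of_succ_le hk
        have hne : (cand G (obits B (orun G B r k)) (orun G B r k)).Nonempty := by
          by_contra hemp
          exact H k hk' (step_eq_of_cand_empty (Finset.not_nonempty_iff_eq_empty.mp hemp))
        rw [orun_succ]
        unfold ostep step
        rw [dif_pos hne]
        simp [ih hk'.le]
    have := hlen m
    rw [grow m le_rfl] at this
    omega

lemma walk_mem {G : SimpleGraph V} {B : Set V} {l : List V}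
    (hc : cand G (obits B l) l = ∅) :
    ∀ {a b : ↑B} (_ : (G.induce B).Walk a b), (a : V) ∈ l → (b : V) ∈ l := by
  intro a b w
  induction w with
  | nil => exact id
  | cons h p ih =>
    rename_i u c d
    intro ha
    apply ih
    by_contra hc'
    have : (c : V) ∈ cand G (obits B l) l :=
      mem_cand_obits.mpr ⟨hc', u, ha, u.2, h⟩
    rw [hc] at this
    simp at this

lemma r_mem_orun (G : SimpleGraph V) (B : Set V) (r : V) (m : ℕ) :
    r ∈ orun G B r m :=
  (orun_prefix G B r (Nat.zero_le m)).subset (by simp [orun])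

lemma B_subset_orun {G : SimpleGraph V} {B : Set V} {r : V} {m : ℕ} (hr : r ∈ B)
    (hconn : (G.induce B).Connected)
    (hfix : ostep G B (orun G B r m) = orun G B r m) :
    ∀ v ∈ B, v ∈ orun G B r m := by
  intro v hv
  have hc := cand_empty_of_step_eq hfix
  obtain ⟨w⟩ := hconn.preconnected ⟨r, hr⟩ ⟨v, hv⟩
  exact walk_mem hc w (r_mem_orun G B r m)

lemma get_prefix {l L : List V} (h : l <+: L) {i : ℕ} (hi : i < l.length)
    (hi' : i < L.length) : L.get ⟨i, hi'⟩ = l.get ⟨i, hi⟩ := by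
  obtain ⟨t, rfl⟩ := h
  simp [List.getElem_append_left hi]

lemma run_eq_orun {G : SimpleGraph V} {B : Set V} {r : V} {m : ℕ} (s : ℕ → Bool)
    (hs : ∀ i, s i = obits B (orun G B r m) i) :
    ∀ k ≤ m, run G s r k = orun G B r k := by
  intro k hk
  induction k with
  | zero => rfl
  | succ k ih =>
    have hk' : k ≤ m := Nat.le_of_succ_le hk
    rw [run_succ, orun_succ, ih hk']
    have hcand : cand G s (orun G B r k) = cand G (obits B (orun G B r k)) (orun G B r k) := by
      apply cand_congr
      intro i hi
      rw [hs i]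
      have hpre := orun_prefix G B r hk'
      have hle : (orun G B r k).length ≤ (orun G B r m).length := hpre.length_le
      simp only [obits]
      apply decide_eq_decide.mpr
      constructor
      · rintro ⟨h', hB⟩
        exact ⟨hi, by rwa [get_prefix hpre hi h'] at hB⟩
      · rintro ⟨h', hB⟩
        exact ⟨lt_of_lt_of_le hi hle, by rwa [get_prefix hpre h']⟩
    unfold ostep step
    rw [hcand]



lemma dec_enc {G : SimpleGraph V} {B : Set V} {r : V} {m : ℕ} (hr : r ∈ B)
    (hconn : (G.induce B).Connected) (hcard : (B ∪ nbr G B).ncard ≤ m) :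
    dec G m (r, fun i : Fin m => obits B (orun G B r m) i) = B := by
  have hlen : ∀ k, (orun G B r k).length ≤ m := fun k => (orun_length_le hr k).trans hcard
  have hfix := exists_stable hlen
  have hBsub := B_subset_orun hr hconn hfix
  have hpad : pad m (fun i : Fin m => obits B (orun G B r m) i) = obits B (orun G B r m) := by
    funext i
    unfold pad
    split
    · rfl
    · rename_i h
      symm
      simp only [obits]
      rw [decide_eq_false_iff_not]
      rintro ⟨hh, -⟩
      exact h (lt_of_lt_of_le hh (hlen m))
  have hrun : run G (obits B (orun G B r m)) r m = orun G B r m :=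
    run_eq_orun _ (fun i => rfl) m le_rfl
  classical
  unfold dec
  simp only [hpad, hrun]
  ext v
  simp only [Set.mem_setOf_eq]
  set L := orun G B r m with hLdef
  constructor
  · rintro ⟨hv, hb⟩
    simp only [obits, decide_eq_true_eq] at hb
    obtain ⟨h, hB⟩ := hb
    rwa [List.idxOf_get h] at hB
  · intro hv
    have hvL : v ∈ L := hBsub v hv
    refine ⟨hvL, ?_⟩
    simp only [obits, decide_eq_true_eq]
    have h : List.idxOf v L < L.length := List.idxOf_lt_length_iff.mpr hvL
    exact ⟨h, by rwa [List.idxOf_get h]⟩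

end Stmt4

/-- The number of `(p, q)`-connected sets of a graph `G` on `n`
vertices, i.e. nonempty vertex sets `B` inducing a connected subgraph with
`|B| ≤ p` and `|N_G(B)| ≤ q`, is at most `2 ^ (p + q) * n`. -/
theorem stmt4 {V : Type} [Fintype V] (G : SimpleGraph V) (p q : ℕ) :
    {B : Set V | B.Nonempty ∧ (G.induce B).Connected ∧ B.ncard ≤ p ∧
        {v | v ∉ B ∧ ∃ u ∈ B, G.Adj u v}.ncard ≤ q}.ncard
      ≤ 2 ^ (p + q) * Fintype.card V := by
  classical
  set S := {B : Set V | B.Nonempty ∧ (G.induce B).Connected ∧ B.ncard ≤ p ∧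
        {v | v ∉ B ∧ ∃ u ∈ B, G.Adj u v}.ncard ≤ q} with hS
  cases isEmpty_or_nonempty V with
  | inl h =>
    have hempty : S = ∅ := by
      ext B
      simp only [hS, Set.mem_setOf_eq, Set.mem_empty_iff_false, iff_false, not_and]
      rintro ⟨v, -⟩
      exact (h.false v).elim
    rw [hempty]
    simp
  | inr h =>
    letI : LinearOrder V := LinearOrder.lift' (Fintype.equivFin V) (Fintype.equivFin V).injective
    set m := p + q with hm
    set f : Set V → V × (Fin m → Bool) := fun B =>
      if hB : B.Nonempty then
        (hB.choose, fun i : Fin m => Stmt4.obits B (Stmt4.orun G B hB.choose m) i)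
      else (h.some, fun _ => false) with hf
    have key : ∀ B ∈ S, Stmt4.dec G m (f B) = B := by
      intro B hB
      obtain ⟨hne, hconn, hp, hq⟩ := hB
      rw [hf]
      simp only [dif_pos hne]
      apply Stmt4.dec_enc hne.choose_spec hconn
      calc (B ∪ Stmt4.nbr G B).ncard ≤ B.ncard + (Stmt4.nbr G B).ncard := Set.ncard_union_le _ _
        _ ≤ p + q := add_le_add hp hq
    have hinj : Set.InjOn f S := by
      intro B hB B' hB' hfe
      rw [← key B hB, ← key B' hB', hfe]
    calc S.ncard ≤ (Set.univ : Set (V × (Fin m → Bool))).ncard :=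
          Set.ncard_le_ncard_of_injOn f (fun a _ => Set.mem_univ _) hinj (Set.finite_univ)
      _ = Fintype.card V * 2 ^ m := by
          rw [Set.ncard_univ, Nat.card_eq_fintype_card, Fintype.card_prod]
          congr 1
          rw [Fintype.card_fun]
          simp
      _ = 2 ^ (p + q) * Fintype.card V := by rw [hm, Nat.mul_comm]
end

section
/- For every class of graphs H containing the empty graph and every graph G, the H-treewidth of G is at most the H-elimination distance of G: tw_H(G) ≤ ed_H(G). -/
/-- An `H`-elimination decomposition of a graph `G` (see the paper): a rooted
forest given by its strict ancestor relation, bags, and base vertices `L`. -/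
structure ElimDecomp (H : ∀ V : Type, SimpleGraph V → Prop) {V : Type}
    (G : SimpleGraph V) where
  ι : Type
  anc : ι → ι → Prop
  anc_trans : ∀ {a b c : ι}, anc a b → anc b c → anc a c
  anc_irrefl : ∀ a : ι, ¬ anc a a
  anc_chain : ∀ {a b c : ι}, anc a c → anc b c → a = b ∨ anc a b ∨ anc b a
  anc_finite : ∀ t : ι, {a : ι | anc a t}.Finite
  bag : ι → Set V
  L : Set V
  internal_bag : ∀ t : ι, (∃ t', anc t t') → (bag t).Subsingleton ∧ bag t ∩ L = ∅
  partition : ∀ v : V, ∃! t : ι, v ∈ bag t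
  edge_anc : ∀ u v : V, G.Adj u v → ∀ t₁ t₂ : ι, u ∈ bag t₁ → v ∈ bag t₂ →
      t₁ = t₂ ∨ anc t₁ t₂ ∨ anc t₂ t₁
  leaf_bag : ∀ t : ι, (∀ t', ¬ anc t t') → bag t ⊆ L ∧ H ↥(bag t) (G.induce (bag t))

/-- An `H`-tree decomposition of a graph `G`: a tree `T` with bags and base
vertices `L` such that the bags containing any vertex form a nonempty connected
subtree, every edge is covered by a bag, each base vertex appears in exactly one
bag which is at a leaf (a node with at most one neighbour), and the base part of
every bag induces a graph in `H`. -/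
structure HTreeDecomp (H : ∀ V : Type, SimpleGraph V → Prop) {V : Type}
    (G : SimpleGraph V) where
  ι : Type
  T : SimpleGraph ι
  tree_conn : T.Connected
  tree_acyclic : T.IsAcyclic
  bag : ι → Set V
  L : Set V
  vert_subtree : ∀ v : V, (T.induce {t : ι | v ∈ bag t}).Connected
  edge_bag : ∀ u v : V, G.Adj u v → ∃ t : ι, u ∈ bag t ∧ v ∈ bag t
  base_unique : ∀ v ∈ L, ∃ t : ι, v ∈ bag t ∧ (T.neighborSet t).Subsingleton ∧
      ∀ t' : ι, v ∈ bag t' → t' = t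
  base_in : ∀ t : ι, H ↥(bag t ∩ L) (G.induce (bag t ∩ L))

namespace Stmt8Aux

variable {H : ∀ V : Type, SimpleGraph V → Prop} {V : Type} {G : SimpleGraph V}

/-- ancestors -/
def A (D : ElimDecomp H G) (t : D.ι) : Set D.ι := {a : D.ι | D.anc a t}

variable (D : ElimDecomp H G)

lemma anc_ncard_lt {a b : D.ι} (h : D.anc a b) : (A D a).ncard < (A D b).ncard := by
  apply Set.ncard_lt_ncard _ (D.anc_finite b)
  constructor
  · intro c hc
    exact D.anc_trans hc h
  · intro hsub
    exact D.anc_irrefl a (hsub h)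

lemma exists_parent {t : D.ι} (h : (A D t).Nonempty) :
    ∃ p, D.anc p t ∧ ∀ b, D.anc b t → b = p ∨ D.anc b p := by
  obtain ⟨p, hp, hmax⟩ := Set.Finite.exists_maximalFor (fun a => (A D a).ncard)
    (A D t) (D.anc_finite t) h
  refine ⟨p, hp, fun b hb => ?_⟩
  rcases D.anc_chain hb hp with h1 | h1 | h1
  · exact Or.inl h1
  · exact Or.inr h1
  · exact absurd (hmax hb (anc_ncard_lt D h1).le) (not_le.mpr (anc_ncard_lt D h1))

open Classical in
noncomputable def par (t : D.ι) : Option D.ι :=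
  if h : (A D t).Nonempty then some (exists_parent D h).choose else none

lemma par_eq_none {t : D.ι} (h : par D t = none) : ∀ a, ¬ D.anc a t := by
  intro a ha
  unfold par at h
  rw [dif_pos ⟨a, ha⟩] at h
  simp at h

lemma par_eq_some {t p : D.ι} (h : par D t = some p) :
    D.anc p t ∧ ∀ b, D.anc b t → b = p ∨ D.anc b p := by
  unfold par at h
  by_cases hne : (A D t).Nonempty
  · rw [dif_pos hne] at h
    obtain rfl : (exists_parent D hne).choose = p := by simpa using h
    exact (exists_parent D hne).choose_spec
  · rw [dif_neg hne] at h; simp at h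

lemma par_of_anc {a t : D.ι} (h : D.anc a t) : ∃ p, par D t = some p := by
  cases hp : par D t with
  | none => exact absurd h (par_eq_none D hp a)
  | some p => exact ⟨p, rfl⟩

/-- parent function on `Option D.ι` -/
noncomputable def pfun : Option D.ι → Option D.ι
  | none => none
  | some t => par D t

/-- depth -/
noncomputable def dep : Option D.ι → ℕ
  | none => 0
  | some t => (A D t).ncard + 1

lemma dep_pfun (t : D.ι) : dep D (pfun D (some t)) < dep D (some t) := by
  cases hp : par D t with
  | none => simp [pfun, hp, dep]
  | some p =>
    simp only [pfun, hp, dep]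
    have := anc_ncard_lt D (par_eq_some D hp).1
    omega

/-- The tree. -/
noncomputable def T : SimpleGraph (Option D.ι) where
  Adj x y := x ≠ y ∧ (pfun D x = y ∨ pfun D y = x)
  symm := by
    constructor
    rintro x y ⟨hne, h⟩
    exact ⟨hne.symm, h.symm⟩
  loopless := ⟨fun x h => h.1 rfl⟩

lemma T_adj {x y : Option D.ι} : (T D).Adj x y ↔ x ≠ y ∧ (pfun D x = y ∨ pfun D y = x) := Iff.rfl

lemma pfun_ne (t : D.ι) : pfun D (some t) ≠ some t := by
  cases hp : par D t with
  | none => simp [pfun, hp]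
  | some p =>
    simp only [pfun, hp, ne_eq, Option.some.injEq]
    rintro rfl
    exact D.anc_irrefl p (par_eq_some D hp).1

lemma adj_pfun (t : D.ι) : (T D).Adj (some t) (pfun D (some t)) :=
  (T_adj D).mpr ⟨(pfun_ne D t).symm, Or.inl rfl⟩

lemma reach_root : ∀ x : Option D.ι, (T D).Reachable none x := by
  have key : ∀ (n : ℕ) (x : Option D.ι), dep D x ≤ n → (T D).Reachable none x := by
    intro n
    induction n with
    | zero =>
      intro x hx
      cases x with
      | none => exact SimpleGraph.Reachable.refl none
      | some t => simp [dep] at hx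
    | succ n ih =>
      intro x hx
      cases x with
      | none => exact SimpleGraph.Reachable.refl none
      | some t =>
        have h1 := ih (pfun D (some t)) (by have := dep_pfun D t; omega)
        exact h1.trans ((adj_pfun D t).symm.reachable)
  exact fun x => key (dep D x) x le_rfl

lemma T_conn : (T D).Connected := by
  rw [SimpleGraph.connected_iff]
  exact ⟨fun x y => (reach_root D x).symm.trans (reach_root D y), ⟨none⟩⟩

/-- invariance of a predicate along reachability -/
lemma reach_invariant {W : Type} {G' : SimpleGraph W} {P : W → Prop}
    (hP : ∀ a b, G'.Adj a b → (P a ↔ P b)) {x y : W} (h : G'.Reachable x y) :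
    P x ↔ P y := by
  obtain ⟨w⟩ := h
  induction w with
  | nil => rfl
  | cons hadj _ ih => exact (hP _ _ hadj).trans ih

/-- subtree of t -/
def desc (t : D.ι) : Option D.ι → Prop :=
  fun y => ∃ s, y = some s ∧ (s = t ∨ D.anc t s)

lemma key_inv {t : D.ι} {u v : Option D.ι} (hne : u ≠ v) (hpar : pfun D u = v)
    (hu : u ≠ some t) : desc D t u ↔ desc D t v := by
  cases u with
  | none => exact absurd hpar hne
  | some s =>
    constructor
    · rintro ⟨s', hs', hst⟩
      rw [Option.some.injEq] at hs'
      subst hs'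
      have hts : D.anc t s := by
        rcases hst with rfl | h
        · exact absurd rfl hu
        · exact h
      cases hp : par D s with
      | none => exact absurd hts (par_eq_none D hp t)
      | some p =>
        have hv : v = some p := by rw [← hpar]; simp [pfun, hp]
        refine ⟨p, hv, ?_⟩
        rcases (par_eq_some D hp).2 t hts with h1 | h1
        · exact Or.inl h1.symm
        · exact Or.inr h1
    · rintro ⟨p, hp, hpt⟩
      refine ⟨s, rfl, Or.inr ?_⟩
      have hps : D.anc p s := by
        subst hp
        cases hq : par D s with
        | none => simp [pfun, hq] at hpar
        | some q =>
          have : q = p := by simpa [pfun, hq] using hpar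
          subst this
          exact (par_eq_some D hq).1
      rcases hpt with rfl | h
      · exact hps
      · exact D.anc_trans h hps

lemma T_acyclic : (T D).IsAcyclic := by
  rw [SimpleGraph.isAcyclic_iff_forall_adj_isBridge]
  -- WLOG via a helper: suffices for edges in parent orientation
  have main : ∀ u v : Option D.ι, (T D).Adj u v → pfun D u = v → (T D).IsBridge s(u, v) := by
    intro u v hadj hpar
    rw [SimpleGraph.isBridge_iff]
    refine fun hreach => ?_
    cases u with
    | none => exact hadj.ne hpar
    | some t =>
      have hinv : ∀ a b : Option D.ι, (T D \ SimpleGraph.fromEdgeSet {s(some t, v)}).Adj a b →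
          (desc D t a ↔ desc D t b) := by
        intro a b hab
        obtain ⟨hab', hns⟩ := hab
        obtain ⟨hne, hor⟩ := (T_adj D).mp hab'
        have hsym : s(a, b) ≠ s(some t, v) := by
          intro h
          apply hns
          simp only [SimpleGraph.fromEdgeSet_adj, Set.mem_singleton_iff]
          exact ⟨h, hne⟩
        rcases hor with h1 | h1
        · -- pfun a = b
          have hat : a ≠ some t := by
            rintro rfl
            exact hsym (by rw [← hpar, h1])
          exact key_inv D hne h1 hat
        · have hbt : b ≠ some t := by
            rintro rfl
            apply hsym
            rw [← hpar, h1, Sym2.eq_swap]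
          exact (key_inv D hne.symm h1 hbt).symm
      have := (reach_invariant hinv hreach).mp ⟨t, rfl, Or.inl rfl⟩
      obtain ⟨s, hs, hst⟩ := this
      subst hs
      have hps : D.anc s t := by
        cases hp : par D t with
        | none => simp [pfun, hp] at hpar
        | some p =>
          have : p = s := by simpa [pfun, hp] using hpar
          subst this
          exact (par_eq_some D hp).1
      rcases hst with rfl | h
      · exact D.anc_irrefl s hps
      · exact D.anc_irrefl s (D.anc_trans hps h)
  intro u v hadj
  rcases ((T_adj D).mp hadj).2 with h | h
  · exact main u v hadj h
  · rw [Sym2.eq_swap]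
    exact main v u hadj.symm h

/-- bags of the tree decomposition -/
def bagT : Option D.ι → Set V
  | none => ∅
  | some t => D.bag t ∪ ⋃ a ∈ A D t, D.bag a

lemma mem_bagT_some {v : V} {t : D.ι} :
    v ∈ bagT D (some t) ↔ v ∈ D.bag t ∨ ∃ a, D.anc a t ∧ v ∈ D.bag a := by
  simp [bagT, A]

lemma mem_bagT_char {v : V} {s : D.ι} (hs : v ∈ D.bag s)
    (huniq : ∀ u, v ∈ D.bag u → u = s) (x : Option D.ι) :
    v ∈ bagT D x ↔ ∃ u, x = some u ∧ (u = s ∨ D.anc s u) := by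
  cases x with
  | none => simp [bagT]
  | some t =>
    rw [mem_bagT_some]
    constructor
    · rintro (h | ⟨a, ha, hva⟩)
      · exact ⟨t, rfl, Or.inl (huniq t h)⟩
      · obtain rfl := huniq a hva
        exact ⟨t, rfl, Or.inr ha⟩
    · rintro ⟨u, hu, hus⟩
      rw [Option.some.injEq] at hu
      subst hu
      rcases hus with rfl | h
      · exact Or.inl hs
      · exact Or.inr ⟨s, h, hs⟩

lemma anc_mem_S {s u : D.ι} (h : u = s ∨ D.anc s u) (hne : u ≠ s) {p : D.ι}
    (hp : par D u = some p) : p = s ∨ D.anc s p := by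
  have hsu : D.anc s u := h.resolve_left hne
  rcases (par_eq_some D hp).2 s hsu with h1 | h1
  · exact Or.inl h1.symm
  · exact Or.inr h1

lemma subtree_conn {v : V} {s : D.ι} (hs : v ∈ D.bag s)
    (huniq : ∀ u, v ∈ D.bag u → u = s) :
    ((T D).induce {x : Option D.ι | v ∈ bagT D x}).Connected := by
  set S : Set (Option D.ι) := {x : Option D.ι | v ∈ bagT D x} with hS
  have hchar : ∀ x, x ∈ S ↔ ∃ u, x = some u ∧ (u = s ∨ D.anc s u) :=
    fun x => mem_bagT_char D hs huniq x
  have hsmem : (some s : Option D.ι) ∈ S := (hchar _).mpr ⟨s, rfl, Or.inl rfl⟩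
  rw [SimpleGraph.connected_iff]
  refine ⟨?_, ⟨⟨some s, hsmem⟩⟩⟩
  have key : ∀ (n : ℕ) (x : Option D.ι) (hx : x ∈ S), dep D x ≤ n →
      ((T D).induce S).Reachable ⟨x, hx⟩ ⟨some s, hsmem⟩ := by
    intro n
    induction n with
    | zero =>
      intro x hx hd
      obtain ⟨u, rfl, _⟩ := (hchar x).mp hx
      simp [dep] at hd
    | succ n ih =>
      intro x hx hd
      obtain ⟨u, rfl, hus⟩ := (hchar _).mp hx
      by_cases hue : u = s
      · subst hue; exact SimpleGraph.Reachable.refl _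
      · have hsu : D.anc s u := hus.resolve_left hue
        obtain ⟨p, hp⟩ := par_of_anc D hsu
        have hpS : (some p : Option D.ι) ∈ S :=
          (hchar _).mpr ⟨p, rfl, anc_mem_S D hus hue hp⟩
        have hadj : ((T D).induce S).Adj ⟨some u, hx⟩ ⟨some p, hpS⟩ := by
          show (T D).Adj (some u) (some p)
          refine (T_adj D).mpr ⟨?_, Or.inl (by simp [pfun, hp])⟩
          intro hup
          rw [Option.some.injEq] at hup
          subst hup
          exact D.anc_irrefl u (par_eq_some D hp).1
        have hdp : dep D (some p) ≤ n := by
          have h1 : dep D (pfun D (some u)) < dep D (some u) := dep_pfun D u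
          have h2 : pfun D (some u) = some p := by simp [pfun, hp]
          rw [h2] at h1
          omega
        exact hadj.reachable.trans (ih (some p) hpS hdp)
  intro a b
  exact (key (dep D a) a a.2 le_rfl).trans (key (dep D b) b b.2 le_rfl).symm


noncomputable def home (v : V) : D.ι := (D.partition v).choose

lemma home_mem (v : V) : v ∈ D.bag (home D v) := (D.partition v).choose_spec.1

lemma home_eq {v : V} {u : D.ι} (h : v ∈ D.bag u) : u = home D v :=
  (D.partition v).choose_spec.2 u h

lemma leaf_nbhd {s : D.ι} (hleaf : ∀ t', ¬ D.anc s t') :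
    ((T D).neighborSet (some s)).Subsingleton := by
  have key : ∀ y ∈ (T D).neighborSet (some s), y = pfun D (some s) := by
    intro y hy
    obtain ⟨hne, h | h⟩ := (T_adj D).mp hy
    · exact h.symm
    · exfalso
      cases y with
      | none => exact hne (by simpa [pfun] using h.symm)
      | some u =>
        have : par D u = some s := by simpa [pfun] using h
        exact hleaf u (par_eq_some D this).1
  intro a ha b hb
  rw [key a ha, key b hb]

lemma internal_of_anc {a t : D.ι} (h : D.anc a t) :
    (D.bag a).Subsingleton ∧ D.bag a ∩ D.L = ∅ :=
  D.internal_bag a ⟨t, h⟩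

lemma bagT_inter_L_internal {t : D.ι} (hint : ∃ t', D.anc t t') :
    bagT D (some t) ∩ D.L = ∅ := by
  ext v
  simp only [Set.mem_inter_iff, Set.mem_empty_iff_false, iff_false, not_and]
  rintro hv hL
  rcases (mem_bagT_some D).mp hv with h | ⟨a, ha, hva⟩
  · exact Set.eq_empty_iff_forall_notMem.mp (D.internal_bag t hint).2 v ⟨h, hL⟩
  · exact Set.eq_empty_iff_forall_notMem.mp (internal_of_anc D ha).2 v ⟨hva, hL⟩

lemma bagT_inter_L_leaf {t : D.ι} (hleaf : ∀ t', ¬ D.anc t t') :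
    bagT D (some t) ∩ D.L = D.bag t := by
  ext v
  simp only [Set.mem_inter_iff]
  constructor
  · rintro ⟨hv, hL⟩
    rcases (mem_bagT_some D).mp hv with h | ⟨a, ha, hva⟩
    · exact h
    · exact (Set.eq_empty_iff_forall_notMem.mp (internal_of_anc D ha).2 v ⟨hva, hL⟩).elim
  · intro hv
    exact ⟨(mem_bagT_some D).mpr (Or.inl hv), (D.leaf_bag t hleaf).1 hv⟩

lemma bag_diff_subsingleton (t : D.ι) : (D.bag t \ D.L).Subsingleton := by
  by_cases hint : ∃ t', D.anc t t'
  · exact (D.internal_bag t hint).1.anti Set.diff_subset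
  · push_neg at hint
    have := (D.leaf_bag t hint).1
    have : D.bag t \ D.L = ∅ := by
      rw [Set.diff_eq_empty]; exact this
    rw [this]; exact Set.subsingleton_empty

lemma width_bound [Fintype V] (d : ℕ) (hd : ∀ t : D.ι, (A D t).ncard ≤ d)
    (x : Option D.ι) : (bagT D x \ D.L).ncard ≤ d + 1 := by
  classical
  cases x with
  | none => simp [bagT]
  | some t =>
    have hsub : bagT D (some t) \ D.L ⊆ (D.bag t \ D.L) ∪ ⋃ a ∈ A D t, D.bag a := by
      intro v hv
      obtain ⟨hv1, hv2⟩ := hv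
      rcases (mem_bagT_some D).mp hv1 with h | ⟨a, ha, hva⟩
      · exact Or.inl ⟨h, hv2⟩
      · exact Or.inr (Set.mem_biUnion ha hva)
    calc (bagT D (some t) \ D.L).ncard
        ≤ ((D.bag t \ D.L) ∪ ⋃ a ∈ A D t, D.bag a).ncard :=
          Set.ncard_le_ncard hsub (Set.toFinite _)
      _ ≤ (D.bag t \ D.L).ncard + (⋃ a ∈ A D t, D.bag a).ncard :=
          Set.ncard_union_le _ _
      _ ≤ 1 + d := by
          gcongr
          · rcases (bag_diff_subsingleton D t).eq_empty_or_singleton with h | ⟨a, h⟩ <;>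
              simp [h]
          · calc (⋃ a ∈ A D t, D.bag a).ncard
                ≤ (A D t).ncard := by
                  refine Set.ncard_le_ncard_of_injOn (home D) ?_ ?_ (D.anc_finite t)
                  · intro v hv
                    obtain ⟨a, ha, hva⟩ := Set.mem_iUnion₂.mp hv
                    rw [← home_eq D hva]
                    exact ha
                  · intro v hv w hw hvw
                    obtain ⟨a, ha, hva⟩ := Set.mem_iUnion₂.mp hv
                    have hav : a = home D v := home_eq D hva
                    have hanc : D.anc (home D v) t := hav ▸ ha
                    have hss := (internal_of_anc D hanc).1
                    exact hss (hav ▸ hva) (hvw ▸ home_mem D w)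
              _ ≤ d := hd t
      _ = d + 1 := by omega

end Stmt8Aux

/-- For every class `H` containing the empty graph and every graph
`G`, `tw_H(G) ≤ ed_H(G)`: any `H`-elimination decomposition of depth at most `d`
yields an `H`-tree decomposition of width at most `d`
(i.e. all bags satisfy `|bag \ L| ≤ d + 1`). -/
theorem stmt8 (H : ∀ V : Type, SimpleGraph V → Prop)
    (hempty : ∀ (W : Type) (G' : SimpleGraph W), IsEmpty W → H W G')
    {V : Type} [Fintype V] (G : SimpleGraph V) (d : ℕ)
    (h : ∃ D : ElimDecomp H G, ∀ t : D.ι, {a : D.ι | D.anc a t}.ncard ≤ d) :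
    ∃ D : HTreeDecomp H G, ∀ t : D.ι, (D.bag t \ D.L).ncard ≤ d + 1 := by
  classical
  obtain ⟨D, hd⟩ := h
  open Stmt8Aux in
  refine ⟨{ ι := Option D.ι
            T := Stmt8Aux.T D
            tree_conn := Stmt8Aux.T_conn D
            tree_acyclic := Stmt8Aux.T_acyclic D
            bag := Stmt8Aux.bagT D
            L := D.L
            vert_subtree := fun v =>
              Stmt8Aux.subtree_conn D (Stmt8Aux.home_mem D v) (fun u h => Stmt8Aux.home_eq D h)
            edge_bag := ?_
            base_unique := ?_
            base_in := ?_ }, ?_⟩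
  · -- edge_bag
    intro u v hadj
    rcases D.edge_anc u v hadj (Stmt8Aux.home D u) (Stmt8Aux.home D v)
      (Stmt8Aux.home_mem D u) (Stmt8Aux.home_mem D v) with heq | hanc | hanc
    · refine ⟨some (Stmt8Aux.home D v), ?_, ?_⟩
      · exact (Stmt8Aux.mem_bagT_some D).mpr (Or.inl (heq ▸ Stmt8Aux.home_mem D u))
      · exact (Stmt8Aux.mem_bagT_some D).mpr (Or.inl (Stmt8Aux.home_mem D v))
    · refine ⟨some (Stmt8Aux.home D v), ?_, ?_⟩
      · exact (Stmt8Aux.mem_bagT_some D).mpr (Or.inr ⟨_, hanc, Stmt8Aux.home_mem D u⟩)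
      · exact (Stmt8Aux.mem_bagT_some D).mpr (Or.inl (Stmt8Aux.home_mem D v))
    · refine ⟨some (Stmt8Aux.home D u), ?_, ?_⟩
      · exact (Stmt8Aux.mem_bagT_some D).mpr (Or.inl (Stmt8Aux.home_mem D u))
      · exact (Stmt8Aux.mem_bagT_some D).mpr (Or.inr ⟨_, hanc, Stmt8Aux.home_mem D v⟩)
  · -- base_unique
    intro v hv
    set s := Stmt8Aux.home D v with hs
    have hvs : v ∈ D.bag s := Stmt8Aux.home_mem D v
    have hleaf : ∀ t', ¬ D.anc s t' := by
      intro t' ht'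
      have := (D.internal_bag s ⟨t', ht'⟩).2
      exact Set.eq_empty_iff_forall_notMem.mp this v ⟨hvs, hv⟩
    refine ⟨some s, (Stmt8Aux.mem_bagT_some D).mpr (Or.inl hvs), Stmt8Aux.leaf_nbhd D hleaf, ?_⟩
    intro x hx
    obtain ⟨u, rfl, hus⟩ := (Stmt8Aux.mem_bagT_char D hvs
      (fun u h => Stmt8Aux.home_eq D h) _).mp hx
    rcases hus with rfl | hanc
    · rfl
    · exact absurd hanc (hleaf u)
  · -- base_in
    intro x
    cases x with
    | none =>
      have hE : Stmt8Aux.bagT D none ∩ D.L = ∅ := by simp [Stmt8Aux.bagT]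
      rw [hE]
      exact hempty _ _ (by infer_instance)
    | some t =>
      by_cases hint : ∃ t', D.anc t t'
      · rw [Stmt8Aux.bagT_inter_L_internal D hint]
        exact hempty _ _ (by infer_instance)
      · push_neg at hint
        rw [Stmt8Aux.bagT_inter_L_leaf D hint]
        exact (D.leaf_bag t hint).2
  · -- width
    intro x
    exact Stmt8Aux.width_bound D d hd x
end
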